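/- Let c, c' ∈ ℤ^k with S̃_c ≠ ∅ and S̃_{c'} ≠ ∅, and suppose J_c ⊆ J_{c'}. Then the minimal face of Z containing π(c') is contained in the minimal face of Z containterminal π(c); i.e., the assignment of minimal faces is inclusion-reversing with respect to the sets J. -/

import Mathlib

/-- The linear map `φ : ℝⁿ → ℝᵏ` given by pairing with the integer vectors `v j`. -/
noncomputable def phiMap {n k : ℕ} (v : Fin k → Fin n → ℤ) :
    (Fin n → ℝ) →ₗ[ℝ] (Fin k → ℝ) where
  toFun u := fun j => ∑ i, u i * (v j i : ℝ)
  map_add' u w := by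
    funext j
    simp [add_mul, Finset.sum_add_distrib]
  map_smul' r u := by
    funext j
    simp [Finset.mul_sum, mul_assoc]

/-- The map `Φ : ℝⁿ → ℤᵏ`, `Φ(u)_j = ⌈⟨u, v_j⟩⌉`. -/
noncomputable def PhiMap {n k : ℕ} (v : Fin k → Fin n → ℤ) (u : Fin n → ℝ) : Fin k → ℤ :=
  fun j => ⌈∑ i, u i * (v j i : ℝ)⌉

/-- The set `J_c` of indices `j` such that `⟨y, v_j⟩ ∈ ℤ` for every `y` in the lifted stratum
`S̃_c`. -/
noncomputable def Jset {n k : ℕ} (v : Fin k → Fin n → ℤ) (c : Fin k → ℤ) : Set (Fin k) :=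
  {j | ∀ y ∈ {y : Fin n → ℝ | PhiMap v y = c}, ∃ m : ℤ, phiMap v y j = (m : ℝ)}

/-- The minimal face of a set `C` containing `p`: the intersection of all extreme subsets of `C`
containing `p`. -/
def minFace {V : Type*} [AddCommGroup V] [Module ℝ V] (C : Set V) (p : V) : Set V :=
  ⋂₀ {F : Set V | IsExtreme ℝ C F ∧ p ∈ F}

/-- The assignment of minimal faces is inclusion-reversing with respect to the sets `J`: if
`J_c ⊆ J_{c'}`, then the minimal face of `Z` containing `π(c')` is contained in the minimal face
of `Z` containing `π(c)`. -/
lemma ceil_phi {n k : ℕ} {v : Fin k → Fin n → ℤ} {y : Fin n → ℝ} {c : Fin k → ℤ}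
    (h : PhiMap v y = c) (j : Fin k) : ⌈phiMap v y j⌉ = c j := by
  have := congrFun h j
  simpa [PhiMap, phiMap] using this

lemma phi_bounds {n k : ℕ} {v : Fin k → Fin n → ℤ} {y : Fin n → ℝ} {c : Fin k → ℤ}
    (h : PhiMap v y = c) (j : Fin k) :
    (c j : ℝ) - 1 < phiMap v y j ∧ phiMap v y j ≤ c j := by
  have hc := ceil_phi h j
  constructor
  · have := Int.ceil_lt_add_one (phiMap v y j)
    rw [hc] at this; linarith
  · exact Int.ceil_le.mp hc.le

/-- A good representative: an element of the stratum where the pairing is strictly below `c j`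
for every `j ∉ J_c`. -/
lemma exists_good_rep {n k : ℕ} (v : Fin k → Fin n → ℤ) (c : Fin k → ℤ)
    (hc : ({y : Fin n → ℝ | PhiMap v y = c}).Nonempty) :
    ∃ y : Fin n → ℝ, ∀ j : Fin k, (c j : ℝ) - 1 < phiMap v y j ∧ phiMap v y j ≤ c j ∧
      (j ∉ Jset v c → phiMap v y j < c j) := by
  classical
  obtain ⟨y₀, hy₀⟩ := hc
  have hzdef : ∀ j : Fin k, ∃ z : Fin n → ℝ, PhiMap v z = c ∧
      (j ∉ Jset v c → ¬∃ m : ℤ, phiMap v z j = (m : ℝ)) := by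
    intro j
    by_cases h : j ∈ Jset v c
    · exact ⟨y₀, hy₀, fun hj => absurd h hj⟩
    · simp only [Jset, Set.mem_setOf_eq, not_forall] at h
      obtain ⟨z, hz, hnz⟩ := h
      exact ⟨z, hz, fun _ => hnz⟩
  choose z hzS hznint using hzdef
  refine ⟨(k : ℝ)⁻¹ • ∑ i, z i, ?_⟩
  intro j
  have hk : 0 < (k : ℝ) := by
    have : 0 < k := Fin.pos j
    exact_mod_cast this
  have hphi : phiMap v ((k : ℝ)⁻¹ • ∑ i, z i) j = (k : ℝ)⁻¹ * ∑ i, phiMap v (z i) j := by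
    rw [map_smul, map_sum]
    simp [Finset.sum_apply]
  have hle : ∀ i : Fin k, phiMap v (z i) j ≤ c j := fun i => (phi_bounds (hzS i) j).2
  have hlt : ∀ i : Fin k, (c j : ℝ) - 1 < phiMap v (z i) j := fun i => (phi_bounds (hzS i) j).1
  have hsum_le : ∑ i, phiMap v (z i) j ≤ (k : ℝ) * c j := by
    calc ∑ i, phiMap v (z i) j ≤ ∑ _i : Fin k, (c j : ℝ) := Finset.sum_le_sum fun i _ => hle i
    _ = (k : ℝ) * c j := by simp [mul_comm]
  have hsum_gt : (k : ℝ) * ((c j : ℝ) - 1) < ∑ i, phiMap v (z i) j := by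
    calc (k : ℝ) * ((c j : ℝ) - 1) = ∑ _i : Fin k, ((c j : ℝ) - 1) := by simp [mul_comm]; ring
    _ < ∑ i, phiMap v (z i) j :=
        Finset.sum_lt_sum_of_nonempty ⟨j, Finset.mem_univ j⟩ (fun i _ => hlt i)
  refine ⟨?_, ?_, ?_⟩
  · rw [hphi]
    rw [show (c j : ℝ) - 1 = (k:ℝ)⁻¹ * ((k:ℝ) * ((c j : ℝ) - 1)) by field_simp]
    exact mul_lt_mul_of_pos_left hsum_gt (by positivity)
  · rw [hphi]
    rw [show (c j : ℝ) = (k:ℝ)⁻¹ * ((k:ℝ) * (c j : ℝ)) by field_simp]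
    exact mul_le_mul_of_nonneg_left hsum_le (by positivity)
  · intro hj
    have hstrict : phiMap v (z j) j < c j := by
      have h1 := hle j
      have h2 := hznint j hj
      rcases lt_or_eq_of_le h1 with h | h
      · exact h
      · exact absurd ⟨c j, h⟩ h2
    have hsum_lt : ∑ i, phiMap v (z i) j < (k : ℝ) * c j := by
      calc ∑ i, phiMap v (z i) j < ∑ _i : Fin k, (c j : ℝ) :=
            Finset.sum_lt_sum (fun i _ => hle i) ⟨j, Finset.mem_univ j, hstrict⟩
      _ = (k : ℝ) * c j := by simp [mul_comm]
    rw [hphi]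
    rw [show (c j : ℝ) = (k:ℝ)⁻¹ * ((k:ℝ) * (c j : ℝ)) by field_simp]
    exact mul_lt_mul_of_pos_left hsum_lt (by positivity)

theorem stmt10 {n k : ℕ} (v : Fin k → Fin n → ℤ) (c c' : Fin k → ℤ)
    (hc : ({y : Fin n → ℝ | PhiMap v y = c}).Nonempty)
    (hc' : ({y : Fin n → ℝ | PhiMap v y = c'}).Nonempty)
    (hJ : Jset v c ⊆ Jset v c') :
    minFace ((LinearMap.range (phiMap v)).mkQ '' {x : Fin k → ℝ | ∀ j, x j ∈ Set.Ico (0 : ℝ) 1})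
        ((LinearMap.range (phiMap v)).mkQ (fun j => (c' j : ℝ))) ⊆
      minFace ((LinearMap.range (phiMap v)).mkQ '' {x : Fin k → ℝ | ∀ j, x j ∈ Set.Ico (0 : ℝ) 1})
        ((LinearMap.range (phiMap v)).mkQ (fun j => (c j : ℝ))) := by
  classical
  set W := LinearMap.range (phiMap v) with hW
  -- good representative for c
  obtain ⟨y, hy⟩ := exists_good_rep v c hc
  set a : Fin k → ℝ := fun j => (c j : ℝ) - phiMap v y j with ha
  have ha_box : ∀ j, 0 ≤ a j ∧ a j < 1 := by
    intro j
    obtain ⟨h1, h2, _⟩ := hy j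
    constructor <;> simp only [ha] <;> linarith
  -- representative for c'
  obtain ⟨y', hy'⟩ := hc'
  set b : Fin k → ℝ := fun j => (c' j : ℝ) - phiMap v y' j with hb
  have hb_box : ∀ j, 0 ≤ b j ∧ b j < 1 := by
    intro j
    obtain ⟨h1, h2⟩ := phi_bounds hy' j
    constructor <;> simp only [hb] <;> linarith
  -- support of b is contained in support of a
  have hsupp : ∀ j, 0 < b j → 0 < a j := by
    intro j hbj
    have hjc' : j ∉ Jset v c' := by
      intro hjmem
      obtain ⟨m, hm⟩ := hjmem y' hy'
      obtain ⟨h1, h2⟩ := phi_bounds hy' j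
      rw [hm] at h1 h2
      have hbj2 : (0:ℝ) < (c' j : ℝ) - phiMap v y' j := hbj
      rw [hm] at hbj2
      have hlt : m < c' j := by exact_mod_cast (by linarith : (m:ℝ) < c' j)
      have hgt : (c' j : ℤ) - 1 < m := by exact_mod_cast (by linarith : ((c' j : ℤ) - 1 : ℝ) < m)
      omega
    have hjc : j ∉ Jset v c := fun hmem => hjc' (hJ hmem)
    have := (hy j).2.2 hjc
    simp only [ha]; linarith
  -- choose t
  set g : Fin k → ℝ := fun j => min (1 - a j) (if 0 < b j then a j else 1) with hg
  have hgpos : ∀ j, 0 < g j := by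
    intro j
    refine lt_min (by linarith [(ha_box j).2]) ?_
    split
    · exact hsupp j (by assumption)
    · norm_num
  set T : Finset ℝ := insert (1 : ℝ) (Finset.univ.image g) with hT
  have hTne : T.Nonempty := ⟨1, Finset.mem_insert_self _ _⟩
  set m := T.min' hTne with hm
  have hmpos : 0 < m := by
    apply lt_of_lt_of_le _ (le_refl m)
    have := Finset.min'_mem T hTne
    rw [← hm] at this
    rcases Finset.mem_insert.mp this with h | h
    · rw [h]; norm_num
    · obtain ⟨j, _, hj⟩ := Finset.mem_image.mp h
      rw [← hj]; exact hgpos j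
  set t : ℝ := m / 2 with ht
  have htpos : 0 < t := by positivity
  have hmle1 : m ≤ 1 := Finset.min'_le T 1 (Finset.mem_insert_self _ _)
  have htlt1 : t < 1 := by rw [ht]; linarith
  have htltg : ∀ j, t < g j := by
    intro j
    have : m ≤ g j := Finset.min'_le T (g j) (Finset.mem_insert_of_mem (Finset.mem_image_of_mem g (Finset.mem_univ j)))
    rw [ht]; linarith [hgpos j]
  have ht_lt_one_sub : ∀ j, t < 1 - a j := fun j => lt_of_lt_of_le (htltg j) (min_le_left _ _)
  have ht_le_a : ∀ j, t * b j ≤ a j := by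
    intro j
    rcases lt_or_ge 0 (b j) with hbj | hbj
    · have h1 : t < a j := by
        have := htltg j
        have : t < if 0 < b j then a j else 1 := lt_of_lt_of_le this (min_le_right _ _)
        simpa [hbj] using this
      nlinarith [(hb_box j).2, htpos]
    · have : b j = 0 := le_antisymm hbj (hb_box j).1
      rw [this]; simpa using (ha_box j).1
  -- the third point
  set d : Fin k → ℝ := fun j => (a j - t * b j) / (1 - t) with hd
  have hd_box : ∀ j, 0 ≤ d j ∧ d j < 1 := by
    intro j
    have h1t : (0:ℝ) < 1 - t := by linarith
    constructor
    · apply div_nonneg _ h1t.le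
      linarith [ht_le_a j]
    · rw [div_lt_one h1t]
      have := ht_lt_one_sub j
      nlinarith [(hb_box j).1, htpos]
  have hcomb : a = t • b + (1 - t) • d := by
    funext j
    have h1t : (1:ℝ) - t ≠ 0 := by linarith
    simp only [Pi.add_apply, Pi.smul_apply, smul_eq_mul, hd]
    field_simp
    ring
  -- quotient facts
  have hQc : W.mkQ (fun j => (c j : ℝ)) = W.mkQ a := by
    rw [Submodule.mkQ_apply, Submodule.mkQ_apply, Submodule.Quotient.eq]
    have : (fun j => (c j : ℝ)) - a = phiMap v y := by
      funext j; simp [ha]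
    rw [this]
    exact ⟨y, rfl⟩
  have hQc' : W.mkQ (fun j => (c' j : ℝ)) = W.mkQ b := by
    rw [Submodule.mkQ_apply, Submodule.mkQ_apply, Submodule.Quotient.eq]
    have : (fun j => (c' j : ℝ)) - b = phiMap v y' := by
      funext j; simp [hb]
    rw [this]
    exact ⟨y', rfl⟩
  -- the key step
  intro x hx
  simp only [minFace, Set.mem_sInter, Set.mem_setOf_eq] at hx ⊢
  rintro F ⟨hFext, hFc⟩
  apply hx
  refine ⟨hFext, ?_⟩
  -- show Q c' ∈ F
  have hbZ : W.mkQ b ∈ W.mkQ '' {x : Fin k → ℝ | ∀ j, x j ∈ Set.Ico (0 : ℝ) 1} :=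
    ⟨b, fun j => ⟨(hb_box j).1, (hb_box j).2⟩, rfl⟩
  have hdZ : W.mkQ d ∈ W.mkQ '' {x : Fin k → ℝ | ∀ j, x j ∈ Set.Ico (0 : ℝ) 1} :=
    ⟨d, fun j => ⟨(hd_box j).1, (hd_box j).2⟩, rfl⟩
  have hFa : W.mkQ a ∈ F := by rwa [hQc] at hFc
  have hseg : W.mkQ a ∈ openSegment ℝ (W.mkQ b) (W.mkQ d) := by
    refine ⟨t, 1 - t, htpos, by linarith, by ring, ?_⟩
    rw [← map_smul, ← map_smul, ← map_add, ← hcomb]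
  have := hFext.2 hbZ hdZ hFa hseg
  rw [hQc']
  exact this
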